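/- For all natural numbers p, q, there is an isomorphism of real algebras Cl_{p+1,q+1}(ℝ) ≅ Cl_{p,q}(ℝ) ⊗_ℝ M₂(ℝ). -/

import Mathlib

open scoped TensorProduct

/-- The real Clifford algebra `Cl_{p,q}(ℝ)` of the quadratic form
`x₁² + … + x_p² − x_{p+1}² − … − x_{p+q}²`. -/
abbrev CliffordPQ (p q : ℕ) : Type :=
  CliffordAlgebra (QuadraticMap.weightedSumSquares ℝ
    (fun i : Fin (p + q) => if (i : ℕ) < p then (1 : ℝ) else -1))

set_option synthInstance.maxHeartbeats 1000000
set_option maxHeartbeats 1000000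
set_option linter.unusedSectionVars false

namespace CliffordSuccAux

open scoped TensorProduct

section Generic
variable {A : Type*} [Ring A] [Algebra ℝ A]

/-- Square of a linear combination of pairwise-anticommuting "generators". -/
lemma sq_sum_of_anticomm {n : ℕ} (w : Fin n → ℝ) (c : Fin n → A)
    (hc : ∀ i, c i * c i = algebraMap ℝ A (w i))
    (ha : ∀ i j, i ≠ j → c i * c j + c j * c i = 0) (v : Fin n → ℝ) :
    (∑ i, v i • c i) * (∑ i, v i • c i) = algebraMap ℝ A (∑ i, w i • (v i * v i)) := by
  rw [Finset.sum_mul_sum]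
  have key : ∀ i j : Fin n, (v i • c i) * (v j • c j) =
      (if i = j then (w i • (v i * v i)) • (1 : A) else 0)
        + (if i ≠ j then (v i * v j) • (c i * c j) else 0) := by
    intro i j
    by_cases h : i = j
    · subst h
      simp [smul_mul_smul_comm, hc i, Algebra.algebraMap_eq_smul_one, smul_smul]
      ring_nf
    · simp only [h, if_false, ite_false, zero_add, smul_mul_smul_comm, ne_eq,
        not_false_eq_true, if_true]
  simp_rw [key, Finset.sum_add_distrib, Finset.sum_ite_eq, Finset.mem_univ, if_pos]
  have hoff : (∑ i : Fin n, ∑ j : Fin n, if i ≠ j then (v i * v j) • (c i * c j) else 0) = 0 := by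
    set S := ∑ i : Fin n, ∑ j : Fin n, if i ≠ j then (v i * v j) • (c i * c j) else 0 with hS
    have hneg : S = -S := by
      have step : ∀ i j : Fin n, (if j ≠ i then (v j * v i) • (c j * c i) else 0)
          = -(if i ≠ j then (v i * v j) • (c i * c j) else 0) := by
        intro i j
        by_cases h : i = j
        · simp [h]
        · have h' : j ≠ i := fun e => h e.symm
          have hij : c i * c j = -(c j * c i) := eq_neg_of_add_eq_zero_left (ha i j h)
          simp only [ne_eq, h, h', not_false_eq_true, if_true]
          rw [hij, smul_neg, neg_neg, mul_comm (v i) (v j)]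
      calc S = ∑ i : Fin n, ∑ j : Fin n, if j ≠ i then (v j * v i) • (c j * c i) else 0 :=
            Finset.sum_comm
        _ = ∑ i : Fin n, ∑ j : Fin n, -(if i ≠ j then (v i * v j) • (c i * c j) else 0) := by
            exact Finset.sum_congr rfl fun i _ => Finset.sum_congr rfl fun j _ => step i j
        _ = -S := by simp [hS]
    have h2 : (2 : ℝ) • S = 0 := by
      rw [two_smul]; nth_rewrite 1 [hneg]; simp
    calc S = (2⁻¹ : ℝ) • ((2:ℝ) • S) := by rw [smul_smul]; norm_num
    _ = 0 := by rw [h2, smul_zero]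
  rw [hoff, add_zero, ← Finset.sum_smul, Algebra.algebraMap_eq_smul_one]
end Generic

section M2
variable {A : Type*} [Ring A] [Algebra ℝ A]

/-- Linear-combination formula for a hom out of `M₂(ℝ)` determined by `f`, `g`. -/
noncomputable def m2Fun (f g : A) (m : Matrix (Fin 2) (Fin 2) ℝ) : A :=
  ((m 0 0 + m 1 1)/2) • 1 + ((m 0 1 + m 1 0)/2) • f + ((m 0 1 - m 1 0)/2) • g
    + ((m 1 1 - m 0 0)/2) • (f * g)

/-- An algebra hom `M₂(ℝ) →ₐ[ℝ] A` from a "hyperbolic pair" `f, g`. -/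
noncomputable def m2Hom (f g : A) (hf : f * f = 1) (hg : g * g = -1) (hfg : f * g = -(g * f)) :
    Matrix (Fin 2) (Fin 2) ℝ →ₐ[ℝ] A :=
  AlgHom.ofLinearMap
    { toFun := m2Fun f g
      map_add' := fun x y => by
        simp only [m2Fun, Matrix.add_apply]
        match_scalars <;> ring
      map_smul' := fun r x => by
        simp only [m2Fun, Matrix.smul_apply, smul_eq_mul, RingHom.id_apply, smul_add]
        match_scalars <;> ring }
    (by
      show m2Fun f g 1 = 1
      simp only [m2Fun, Matrix.one_apply]
      norm_num)
    (by
      intro x y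
      have hgf : g * f = -(f * g) := by rw [hfg, neg_neg]
      have hffg : f * (f * g) = g := by rw [← mul_assoc, hf, one_mul]
      have hfgf : (f * g) * f = -g := by rw [mul_assoc, hgf, mul_neg, hffg]
      have hgfg : g * (f * g) = f := by
        rw [← mul_assoc, hgf, neg_mul, mul_assoc, hg, mul_neg_one, neg_neg]
      have hfgg : (f * g) * g = -f := by rw [mul_assoc, hg, mul_neg_one]
      have hfgfg : (f * g) * (f * g) = 1 := by
        rw [← mul_assoc, hfgf, neg_mul, hg, neg_neg]
      show m2Fun f g (x * y) = m2Fun f g x * m2Fun f g y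
      simp only [m2Fun, Matrix.mul_apply, Fin.sum_univ_two]
      simp only [add_mul, mul_add, smul_mul_assoc, mul_smul_comm, smul_smul, one_mul,
        mul_one, hf, hg, hgf, hffg, hfgf, hgfg, hfgg, hfgfg, smul_neg]
      match_scalars <;> ring)
end M2



noncomputable def matF : Matrix (Fin 2) (Fin 2) ℝ := !![0,1;1,0]
noncomputable def matG : Matrix (Fin 2) (Fin 2) ℝ := !![0,1;-1,0]
noncomputable def matΩ : Matrix (Fin 2) (Fin 2) ℝ := !![-1,0;0,1]

lemma matF_sq : matF * matF = 1 := by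
  simp [matF, Matrix.mul_fin_two, Matrix.one_fin_two]
lemma matG_sq : matG * matG = -1 := by
  simp [matG, Matrix.mul_fin_two, Matrix.one_fin_two]
lemma matFG : matF * matG = matΩ := by
  simp [matF, matG, matΩ, Matrix.mul_fin_two]
lemma matGF : matG * matF = -matΩ := by
  simp [matF, matG, matΩ, Matrix.mul_fin_two]
lemma matΩ_sq : matΩ * matΩ = 1 := by
  simp [matΩ, Matrix.mul_fin_two, Matrix.one_fin_two]
lemma matFΩ_anti : matF * matΩ + matΩ * matF = 0 := by
  ext i j; fin_cases i <;> fin_cases j <;> simp [matF, matΩ, Matrix.mul_fin_two]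
lemma matGΩ_anti : matG * matΩ + matΩ * matG = 0 := by
  ext i j; fin_cases i <;> fin_cases j <;> simp [matG, matΩ, Matrix.mul_fin_two]
lemma matFG_anti : matF * matG + matG * matF = 0 := by
  rw [matFG, matGF]; exact add_neg_cancel _
lemma mat_reconstruct (m : Matrix (Fin 2) (Fin 2) ℝ) :
    ((m 0 0 + m 1 1)/2) • (1 : Matrix (Fin 2) (Fin 2) ℝ) + ((m 0 1 + m 1 0)/2) • matF
      + ((m 0 1 - m 1 0)/2) • matG + ((m 1 1 - m 0 0)/2) • matΩ = m := by
  ext i j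
  fin_cases i <;> fin_cases j <;>
    simp [matF, matG, matΩ, Matrix.one_fin_two] <;> ring





lemma wss_single {n : ℕ} (w : Fin n → ℝ) (i : Fin n) :
    QuadraticMap.weightedSumSquares ℝ w (Pi.single i 1) = w i := by
  rw [QuadraticMap.weightedSumSquares_apply]
  rw [Finset.sum_eq_single i]
  · simp
  · intro b _ hb; simp [Pi.single_apply, hb]
  · simp

lemma wss_isOrtho {n : ℕ} (w : Fin n → ℝ) {i j : Fin n} (h : i ≠ j) :
    (QuadraticMap.weightedSumSquares ℝ w).IsOrtho (Pi.single i 1) (Pi.single j 1) := by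
  rw [QuadraticMap.isOrtho_def]
  simp only [QuadraticMap.weightedSumSquares_apply]
  rw [← Finset.sum_add_distrib]
  refine Finset.sum_congr rfl fun k _ => ?_
  by_cases hk : k = i <;> by_cases hk' : k = j <;>
    subst_eqs <;> simp_all [Pi.single_apply]



section Main
variable (p q : ℕ)

noncomputable def QB : QuadraticForm ℝ (Fin (p + 1 + (q + 1)) → ℝ) :=
  QuadraticMap.weightedSumSquares ℝ
    (fun i : Fin (p + 1 + (q + 1)) => if (i : ℕ) < p + 1 then (1 : ℝ) else -1)

noncomputable def QS : QuadraticForm ℝ (Fin (p + q) → ℝ) :=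
  QuadraticMap.weightedSumSquares ℝ
    (fun i : Fin (p + q) => if (i : ℕ) < p then (1 : ℝ) else -1)

noncomputable abbrev wB : Fin (p + 1 + (q + 1)) → ℝ :=
  fun i => if (i : ℕ) < p + 1 then (1 : ℝ) else -1
noncomputable abbrev wS : Fin (p + q) → ℝ :=
  fun i => if (i : ℕ) < p then (1 : ℝ) else -1

noncomputable def eB (i : Fin (p + 1 + (q + 1))) : CliffordAlgebra (QB p q) :=
  CliffordAlgebra.ι (QB p q) (Pi.single i 1)
noncomputable def eS (i : Fin (p + q)) : CliffordAlgebra (QS p q) :=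
  CliffordAlgebra.ι (QS p q) (Pi.single i 1)

lemma eB_sq (i) : eB p q i * eB p q i = algebraMap ℝ _ (wB p q i) := by
  rw [eB, CliffordAlgebra.ι_sq_scalar, QB, wss_single]

lemma eB_anti {i j} (h : i ≠ j) : eB p q i * eB p q j + eB p q j * eB p q i = 0 :=
  CliffordAlgebra.ι_mul_ι_add_swap_of_isOrtho (wss_isOrtho _ h)

lemma eB_anti' {i j} (h : i ≠ j) : eB p q i * eB p q j = -(eB p q j * eB p q i) :=
  eq_neg_of_add_eq_zero_left (eB_anti p q h)

lemma eS_sq (i) : eS p q i * eS p q i = algebraMap ℝ _ (wS p q i) := by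
  rw [eS, CliffordAlgebra.ι_sq_scalar, QS, wss_single]

lemma eS_anti {i j} (h : i ≠ j) : eS p q i * eS p q j + eS p q j * eS p q i = 0 :=
  CliffordAlgebra.ι_mul_ι_add_swap_of_isOrtho (wss_isOrtho _ h)

noncomputable def fiI : Fin (p + 1 + (q + 1)) := ⟨p, by omega⟩
noncomputable def giI : Fin (p + 1 + (q + 1)) := ⟨p + q + 1, by omega⟩

lemma fiI_ne_giI : fiI p q ≠ giI p q := by
  simp only [fiI, giI, ne_eq, Fin.mk.injEq]; omega

noncomputable def emb (i : Fin (p + q)) : Fin (p + 1 + (q + 1)) :=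
  ⟨if (i : ℕ) < p then (i : ℕ) else (i : ℕ) + 1, by have := i.isLt; split <;> omega⟩

lemma emb_ne_fiI (i) : emb p q i ≠ fiI p q := by
  have := i.isLt
  simp only [emb, fiI, ne_eq, Fin.mk.injEq]
  split <;> omega

lemma emb_ne_giI (i) : emb p q i ≠ giI p q := by
  have := i.isLt
  simp only [emb, giI, ne_eq, Fin.mk.injEq]
  split <;> omega

lemma emb_inj {i j} (h : emb p q i = emb p q j) : i = j := by
  simp only [emb, Fin.mk.injEq] at h
  have hi := i.isLt; have hj := j.isLt
  apply Fin.ext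
  split_ifs at h <;> omega

lemma wB_emb (i) : wB p q (emb p q i) = wS p q i := by
  have := i.isLt
  simp only [wB, wS, emb]
  split_ifs <;> first | rfl | omega

noncomputable def smV (i : Fin (p + 1 + (q + 1))) (h1 : (i : ℕ) ≠ p) (h2 : (i : ℕ) ≠ p + q + 1) :
    Fin (p + q) :=
  ⟨if (i : ℕ) < p then (i : ℕ) else (i : ℕ) - 1, by have := i.isLt; split <;> omega⟩

lemma smV_emb (i : Fin (p + q)) (h1) (h2) : smV p q (emb p q i) h1 h2 = i := by
  have := i.isLt
  apply Fin.ext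
  simp only [smV, emb]
  split_ifs <;> omega

lemma emb_smV (i : Fin (p + 1 + (q + 1))) (h1) (h2) : emb p q (smV p q i h1 h2) = i := by
  have := i.isLt
  apply Fin.ext
  simp only [smV, emb]
  split_ifs <;> omega

lemma wS_smV (i) (h1) (h2) : wS p q (smV p q i h1 h2) = wB p q i := by
  rw [← wB_emb, emb_smV]

noncomputable def cgen (i : Fin (p + 1 + (q + 1))) :
    CliffordAlgebra (QS p q) ⊗[ℝ] Matrix (Fin 2) (Fin 2) ℝ :=
  if h1 : (i : ℕ) = p then 1 ⊗ₜ matF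
  else if h2 : (i : ℕ) = p + q + 1 then 1 ⊗ₜ matG
  else eS p q (smV p q i h1 h2) ⊗ₜ matΩ

lemma cgen_fiI : cgen p q (fiI p q) = 1 ⊗ₜ matF := by
  unfold cgen; exact dif_pos rfl

lemma cgen_giI : cgen p q (giI p q) = 1 ⊗ₜ matG := by
  unfold cgen
  rw [dif_neg (show ¬((giI p q : ℕ) = p) by simp only [giI]; omega)]
  exact dif_pos rfl

lemma emb_val_ne_p (i) : ((emb p q i : Fin (p+1+(q+1))) : ℕ) ≠ p :=
  fun h => emb_ne_fiI p q i (Fin.ext h)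

lemma emb_val_ne_pq1 (i) : ((emb p q i : Fin (p+1+(q+1))) : ℕ) ≠ p + q + 1 :=
  fun h => emb_ne_giI p q i (Fin.ext h)

lemma cgen_other (i : Fin (p + 1 + (q + 1))) (h1 : (i : ℕ) ≠ p) (h2 : (i : ℕ) ≠ p + q + 1) :
    cgen p q i = eS p q (smV p q i h1 h2) ⊗ₜ matΩ := by
  unfold cgen; rw [dif_neg h1, dif_neg h2]

lemma cgen_emb (i) : cgen p q (emb p q i) = eS p q i ⊗ₜ matΩ := by
  rw [cgen_other p q _ (emb_val_ne_p p q i) (emb_val_ne_pq1 p q i), smV_emb]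

lemma cgen_sq (i) : cgen p q i * cgen p q i = algebraMap ℝ _ (wB p q i) := by
  by_cases h1 : (i : ℕ) = p
  · obtain rfl : i = fiI p q := Fin.ext h1
    rw [cgen_fiI, Algebra.TensorProduct.tmul_mul_tmul, one_mul, matF_sq]
    have hw : wB p q (fiI p q) = 1 := by simp only [wB, fiI]; exact if_pos (by omega)
    rw [hw, map_one, Algebra.TensorProduct.one_def]
  · by_cases h2 : (i : ℕ) = p + q + 1
    · obtain rfl : i = giI p q := Fin.ext h2
      rw [cgen_giI, Algebra.TensorProduct.tmul_mul_tmul, one_mul, matG_sq]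
      have hw : wB p q (giI p q) = -1 := by simp only [wB, giI]; exact if_neg (by omega)
      rw [hw, map_neg, map_one, TensorProduct.tmul_neg, Algebra.TensorProduct.one_def]
    · rw [cgen_other p q i h1 h2, Algebra.TensorProduct.tmul_mul_tmul, matΩ_sq, eS_sq, wS_smV,
        Algebra.TensorProduct.algebraMap_apply]

lemma cgen_anti {i j} (h : i ≠ j) :
    cgen p q i * cgen p q j + cgen p q j * cgen p q i = 0 := by
  by_cases hi1 : (i : ℕ) = p
  · obtain rfl : i = fiI p q := Fin.ext hi1
    by_cases hj1 : (j : ℕ) = p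
    · exact absurd (Fin.ext (hi1.trans hj1.symm) : fiI p q = j).symm h.symm
    · by_cases hj2 : (j : ℕ) = p + q + 1
      · obtain rfl : j = giI p q := Fin.ext hj2
        rw [cgen_fiI, cgen_giI]
        simp only [Algebra.TensorProduct.tmul_mul_tmul, one_mul, mul_one]
        rw [← TensorProduct.tmul_add, matFG_anti, TensorProduct.tmul_zero]
      · rw [cgen_fiI, cgen_other p q j hj1 hj2]
        simp only [Algebra.TensorProduct.tmul_mul_tmul, one_mul, mul_one]
        rw [← TensorProduct.tmul_add, matFΩ_anti, TensorProduct.tmul_zero]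
  · by_cases hi2 : (i : ℕ) = p + q + 1
    · obtain rfl : i = giI p q := Fin.ext hi2
      by_cases hj1 : (j : ℕ) = p
      · obtain rfl : j = fiI p q := Fin.ext hj1
        rw [cgen_giI, cgen_fiI]
        simp only [Algebra.TensorProduct.tmul_mul_tmul, one_mul, mul_one]
        rw [← TensorProduct.tmul_add, add_comm (matG * matF) (matF * matG),
          matFG_anti, TensorProduct.tmul_zero]
      · by_cases hj2 : (j : ℕ) = p + q + 1
        · exact absurd (Fin.ext (hi2.trans hj2.symm) : giI p q = j).symm h.symm
        · rw [cgen_giI, cgen_other p q j hj1 hj2]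
          simp only [Algebra.TensorProduct.tmul_mul_tmul, one_mul, mul_one]
          rw [← TensorProduct.tmul_add, matGΩ_anti, TensorProduct.tmul_zero]
    · by_cases hj1 : (j : ℕ) = p
      · obtain rfl : j = fiI p q := Fin.ext hj1
        rw [cgen_fiI, cgen_other p q i hi1 hi2]
        simp only [Algebra.TensorProduct.tmul_mul_tmul, one_mul, mul_one]
        rw [← TensorProduct.tmul_add, add_comm (matΩ * matF) (matF * matΩ),
          matFΩ_anti, TensorProduct.tmul_zero]
      · by_cases hj2 : (j : ℕ) = p + q + 1
        · obtain rfl : j = giI p q := Fin.ext hj2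
          rw [cgen_giI, cgen_other p q i hi1 hi2]
          simp only [Algebra.TensorProduct.tmul_mul_tmul, one_mul, mul_one]
          rw [← TensorProduct.tmul_add, add_comm (matΩ * matG) (matG * matΩ),
            matGΩ_anti, TensorProduct.tmul_zero]
        · rw [cgen_other p q i hi1 hi2, cgen_other p q j hj1 hj2,
            Algebra.TensorProduct.tmul_mul_tmul, Algebra.TensorProduct.tmul_mul_tmul,
            matΩ_sq, ← TensorProduct.add_tmul]
          have hne : smV p q i hi1 hi2 ≠ smV p q j hj1 hj2 := by
            intro e
            exact h (by rw [← emb_smV p q i hi1 hi2, ← emb_smV p q j hj1 hj2, e])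
          rw [eS_anti p q hne, TensorProduct.zero_tmul]

end Main

section Hyp
variable {A : Type*} [Ring A] [Algebra ℝ A]

lemma m2Hom_apply (f g : A) (hf : f * f = 1) (hg : g * g = -1) (hfg : f * g = -(g * f)) (m) :
    m2Hom f g hf hg hfg m = m2Fun f g m := rfl

lemma m2Hom_matF (f g : A) (hf : f * f = 1) (hg : g * g = -1) (hfg : f * g = -(g * f)) :
    m2Hom f g hf hg hfg matF = f := by
  rw [m2Hom_apply]; simp [m2Fun, matF]

lemma m2Hom_matG (f g : A) (hf : f * f = 1) (hg : g * g = -1) (hfg : f * g = -(g * f)) :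
    m2Hom f g hf hg hfg matG = g := by
  rw [m2Hom_apply]; simp [m2Fun, matG]

lemma m2Hom_matΩ (f g : A) (hf : f * f = 1) (hg : g * g = -1) (hfg : f * g = -(g * f)) :
    m2Hom f g hf hg hfg matΩ = f * g := by
  rw [m2Hom_apply]; simp [m2Fun, matΩ]

lemma hyp_omega_sq (f g : A) (hf : f * f = 1) (hg : g * g = -1) (hfg : f * g = -(g * f)) :
    (f * g) * (f * g) = 1 := by
  have hgf : g * f = -(f * g) := by rw [hfg, neg_neg]
  have hfgf : (f * g) * f = -(f * (f * g)) := by rw [mul_assoc, hgf, mul_neg]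
  rw [← mul_assoc, hfgf, neg_mul, ← mul_assoc f f g, hf, one_mul, hg, neg_neg]

lemma omega_anti_f (f g : A) (hfg : f * g = -(g * f)) :
    (f * g) * f = -(f * (f * g)) := by
  have hgf : g * f = -(f * g) := by rw [hfg, neg_neg]
  rw [mul_assoc, hgf, mul_neg]

lemma omega_anti_g (f g : A) (hg : g * g = -1) (hfg : f * g = -(g * f)) :
    (f * g) * g = -(g * (f * g)) := by
  have hgf : g * f = -(f * g) := by rw [hfg, neg_neg]
  have h1 : g * (f * g) = f := by
    rw [← mul_assoc, hgf, neg_mul, mul_assoc, hg, mul_neg_one, neg_neg]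
  rw [mul_assoc, hg, mul_neg_one, h1]

lemma anti_anti_commute (a b c : A) (h1 : a * c = -(c * a)) (h2 : b * c = -(c * b)) :
    Commute (a * b) c := by
  show (a * b) * c = c * (a * b)
  rw [mul_assoc, h2, mul_neg, ← mul_assoc, h1, neg_mul, neg_neg, mul_assoc]

end Hyp

section PiHelp
variable {M : Type*} [AddCommMonoid M] [Module ℝ M]

lemma sum_single_smul {n : ℕ} (j : Fin n) (d : Fin n → M) :
    ∑ i, (Pi.single j (1 : ℝ) : Fin n → ℝ) i • d i = d j := by
  rw [Finset.sum_eq_single j]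
  · simp
  · intro b _ hb; simp [Pi.single_apply, hb]
  · simp

lemma lin_pi_apply {n : ℕ} (L : (Fin n → ℝ) →ₗ[ℝ] M) (v : Fin n → ℝ) :
    L v = ∑ i, v i • L (Pi.single i 1) := by
  have hv : v = ∑ i, v i • (Pi.single i (1 : ℝ) : Fin n → ℝ) := by
    ext j
    rw [Finset.sum_apply]
    rw [Finset.sum_eq_single j]
    · simp
    · intro b _ hb; simp [Pi.single_apply, Ne.symm hb]
    · simp
  conv_lhs => rw [hv]
  rw [map_sum]
  simp_rw [map_smul]

end PiHelp

section Main2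
variable (p q : ℕ)

lemma wB_fiI : wB p q (fiI p q) = 1 := by
  simp only [wB, fiI]; exact if_pos (by omega)

lemma wB_giI : wB p q (giI p q) = -1 := by
  simp only [wB, giI]; exact if_neg (by omega)

lemma fA_sq : eB p q (fiI p q) * eB p q (fiI p q) = 1 := by
  rw [eB_sq, wB_fiI, map_one]

lemma gA_sq : eB p q (giI p q) * eB p q (giI p q) = -1 := by
  rw [eB_sq, wB_giI, map_neg, map_one]

lemma fgA_anti : eB p q (fiI p q) * eB p q (giI p q)
    = -(eB p q (giI p q) * eB p q (fiI p q)) :=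
  eq_neg_of_add_eq_zero_left (eB_anti p q (fiI_ne_giI p q))

lemma eB_anti_f (k) (hk : k ≠ fiI p q) :
    eB p q k * eB p q (fiI p q) = -(eB p q (fiI p q) * eB p q k) :=
  eq_neg_of_add_eq_zero_left (eB_anti p q hk)

lemma eB_anti_g (k) (hk : k ≠ giI p q) :
    eB p q k * eB p q (giI p q) = -(eB p q (giI p q) * eB p q k) :=
  eq_neg_of_add_eq_zero_left (eB_anti p q hk)

noncomputable def dgen (i : Fin (p + q)) : CliffordAlgebra (QB p q) :=
  eB p q (emb p q i) * (eB p q (fiI p q) * eB p q (giI p q))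

lemma commute_omega_eB (k) (hkf : k ≠ fiI p q) (hkg : k ≠ giI p q) :
    Commute (eB p q (fiI p q) * eB p q (giI p q)) (eB p q k) :=
  anti_anti_commute _ _ _
    (eq_neg_of_add_eq_zero_left (eB_anti p q (Ne.symm hkf)))
    (eq_neg_of_add_eq_zero_left (eB_anti p q (Ne.symm hkg)))

lemma dgen_mul (i j) : dgen p q i * dgen p q j = eB p q (emb p q i) * eB p q (emb p q j) := by
  have hωe : (eB p q (fiI p q) * eB p q (giI p q)) * eB p q (emb p q j)
      = eB p q (emb p q j) * (eB p q (fiI p q) * eB p q (giI p q)) :=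
    commute_omega_eB p q _ (emb_ne_fiI p q j) (emb_ne_giI p q j)
  have hω2 : (eB p q (fiI p q) * eB p q (giI p q)) * (eB p q (fiI p q) * eB p q (giI p q)) = 1 :=
    hyp_omega_sq _ _ (fA_sq p q) (gA_sq p q) (fgA_anti p q)
  unfold dgen
  rw [mul_assoc, ← mul_assoc (eB p q (fiI p q) * eB p q (giI p q)), hωe, mul_assoc, hω2,
    mul_one]

lemma dgen_sq (i) : dgen p q i * dgen p q i = algebraMap ℝ _ (wS p q i) := by
  rw [dgen_mul, eB_sq, wB_emb]

lemma dgen_anti {i j} (h : i ≠ j) : dgen p q i * dgen p q j + dgen p q j * dgen p q i = 0 := by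
  rw [dgen_mul, dgen_mul]
  exact eB_anti p q (fun e => h (emb_inj p q e))

noncomputable def Lc : (Fin (p + 1 + (q + 1)) → ℝ) →ₗ[ℝ]
    (CliffordAlgebra (QS p q) ⊗[ℝ] Matrix (Fin 2) (Fin 2) ℝ) :=
  ∑ i, LinearMap.smulRight (LinearMap.proj i) (cgen p q i)

lemma Lc_apply (v) : Lc p q v = ∑ i, v i • cgen p q i := by
  simp [Lc, LinearMap.sum_apply, LinearMap.smulRight_apply, LinearMap.proj_apply]

noncomputable def φh : CliffordAlgebra (QB p q) →ₐ[ℝ]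
    (CliffordAlgebra (QS p q) ⊗[ℝ] Matrix (Fin 2) (Fin 2) ℝ) :=
  CliffordAlgebra.lift (QB p q) ⟨Lc p q, fun v => by
    rw [Lc_apply, sq_sum_of_anticomm (wB p q) (cgen p q) (cgen_sq p q)
      (fun i j hij => cgen_anti p q hij) v]
    simp only [QB, QuadraticMap.weightedSumSquares_apply]⟩

lemma φh_ι (v) : φh p q (CliffordAlgebra.ι (QB p q) v) = Lc p q v :=
  CliffordAlgebra.lift_ι_apply _ _ v

lemma φh_eB (i) : φh p q (eB p q i) = cgen p q i := by
  rw [eB, φh_ι, Lc_apply, sum_single_smul]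

noncomputable def Ld : (Fin (p + q) → ℝ) →ₗ[ℝ] CliffordAlgebra (QB p q) :=
  ∑ i, LinearMap.smulRight (LinearMap.proj i) (dgen p q i)

lemma Ld_apply (v) : Ld p q v = ∑ i, v i • dgen p q i := by
  simp [Ld, LinearMap.sum_apply, LinearMap.smulRight_apply, LinearMap.proj_apply]

noncomputable def ψ₁ : CliffordAlgebra (QS p q) →ₐ[ℝ] CliffordAlgebra (QB p q) :=
  CliffordAlgebra.lift (QS p q) ⟨Ld p q, fun v => by
    rw [Ld_apply, sq_sum_of_anticomm (wS p q) (dgen p q) (dgen_sq p q)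
      (fun i j hij => dgen_anti p q hij) v]
    simp only [QS, QuadraticMap.weightedSumSquares_apply]⟩

lemma ψ₁_ι (v) : ψ₁ p q (CliffordAlgebra.ι (QS p q) v) = Ld p q v :=
  CliffordAlgebra.lift_ι_apply _ _ v

lemma ψ₁_eS (i) : ψ₁ p q (eS p q i) = dgen p q i := by
  rw [eS, ψ₁_ι, Ld_apply, sum_single_smul]

noncomputable def ψ₂ : Matrix (Fin 2) (Fin 2) ℝ →ₐ[ℝ] CliffordAlgebra (QB p q) :=
  m2Hom (eB p q (fiI p q)) (eB p q (giI p q)) (fA_sq p q) (gA_sq p q) (fgA_anti p q)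

lemma ψ₁_commute_f (x) : Commute (ψ₁ p q x) (eB p q (fiI p q)) := by
  induction x using CliffordAlgebra.induction with
  | algebraMap r => rw [AlgHom.commutes]; exact Algebra.commute_algebraMap_left r _
  | ι v =>
    rw [ψ₁_ι, Ld_apply]
    refine Commute.sum_left _ _ _ (fun i _ => ?_)
    refine Commute.smul_left ?_ _
    exact anti_anti_commute _ _ _
      (eq_neg_of_add_eq_zero_left (eB_anti p q (emb_ne_fiI p q i)))
      (omega_anti_f _ _ (fgA_anti p q))
  | mul x y hx hy => rw [map_mul]; exact hx.mul_left hy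
  | add x y hx hy => rw [map_add]; exact hx.add_left hy

lemma ψ₁_commute_g (x) : Commute (ψ₁ p q x) (eB p q (giI p q)) := by
  induction x using CliffordAlgebra.induction with
  | algebraMap r => rw [AlgHom.commutes]; exact Algebra.commute_algebraMap_left r _
  | ι v =>
    rw [ψ₁_ι, Ld_apply]
    refine Commute.sum_left _ _ _ (fun i _ => ?_)
    refine Commute.smul_left ?_ _
    exact anti_anti_commute _ _ _
      (eq_neg_of_add_eq_zero_left (eB_anti p q (emb_ne_giI p q i)))
      (omega_anti_g _ _ (gA_sq p q) (fgA_anti p q))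
  | mul x y hx hy => rw [map_mul]; exact hx.mul_left hy
  | add x y hx hy => rw [map_add]; exact hx.add_left hy

lemma ψ₁_commute_ψ₂ (x y) : Commute (ψ₁ p q x) (ψ₂ p q y) := by
  rw [ψ₂, m2Hom_apply]
  unfold m2Fun
  refine ((((Commute.one_right _).smul_right _).add_right ?_).add_right ?_).add_right ?_
  · exact (ψ₁_commute_f p q x).smul_right _
  · exact (ψ₁_commute_g p q x).smul_right _
  · exact ((ψ₁_commute_f p q x).mul_right (ψ₁_commute_g p q x)).smul_right _

noncomputable def ψh : (CliffordAlgebra (QS p q) ⊗[ℝ] Matrix (Fin 2) (Fin 2) ℝ) →ₐ[ℝ]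
    CliffordAlgebra (QB p q) :=
  Algebra.TensorProduct.lift (ψ₁ p q) (ψ₂ p q) (ψ₁_commute_ψ₂ p q)

lemma ψh_tmul (x m) : ψh p q (x ⊗ₜ m) = ψ₁ p q x * ψ₂ p q m :=
  Algebra.TensorProduct.lift_tmul _ _ _ _ _

lemma ψh_cgen (i) : ψh p q (cgen p q i) = eB p q i := by
  by_cases h1 : (i : ℕ) = p
  · obtain rfl : i = fiI p q := Fin.ext h1
    rw [cgen_fiI, ψh_tmul, map_one, one_mul, ψ₂, m2Hom_matF]
  · by_cases h2 : (i : ℕ) = p + q + 1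
    · obtain rfl : i = giI p q := Fin.ext h2
      rw [cgen_giI, ψh_tmul, map_one, one_mul, ψ₂, m2Hom_matG]
    · rw [cgen_other p q i h1 h2, ψh_tmul, ψ₁_eS, ψ₂, m2Hom_matΩ, dgen, mul_assoc,
        hyp_omega_sq _ _ (fA_sq p q) (gA_sq p q) (fgA_anti p q), mul_one, emb_smV]

lemma φh_dgen (i) : φh p q (dgen p q i) = eS p q i ⊗ₜ 1 := by
  rw [dgen, map_mul, map_mul, φh_eB, φh_eB, φh_eB, cgen_emb, cgen_fiI, cgen_giI,
    Algebra.TensorProduct.tmul_mul_tmul, one_mul, matFG,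
    Algebra.TensorProduct.tmul_mul_tmul, mul_one, matΩ_sq]

lemma comp1 : (ψh p q).comp (φh p q) = AlgHom.id ℝ _ := by
  refine CliffordAlgebra.hom_ext (LinearMap.ext fun v => ?_)
  simp only [LinearMap.comp_apply, AlgHom.toLinearMap_apply, AlgHom.comp_apply, AlgHom.id_apply]
  rw [φh_ι, Lc_apply, map_sum]
  simp_rw [map_smul, ψh_cgen]
  exact (lin_pi_apply (CliffordAlgebra.ι (QB p q)) v).symm

lemma comp2 : (φh p q).comp (ψh p q) = AlgHom.id ℝ _ := by
  refine Algebra.TensorProduct.ext ?_ ?_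
  · refine CliffordAlgebra.hom_ext (LinearMap.ext fun v => ?_)
    simp only [LinearMap.comp_apply, AlgHom.toLinearMap_apply, AlgHom.comp_apply,
      AlgHom.id_apply, Algebra.TensorProduct.includeLeft_apply]
    rw [ψh_tmul, map_one, mul_one, ψ₁_ι, Ld_apply, map_sum]
    simp_rw [map_smul, φh_dgen, TensorProduct.smul_tmul']
    rw [← TensorProduct.sum_tmul]
    congr 1
    exact (lin_pi_apply (CliffordAlgebra.ι (QS p q)) v).symm
  · refine AlgHom.ext fun m => ?_
    simp only [AlgHom.comp_apply, AlgHom.restrictScalars_apply, AlgHom.id_apply,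
      Algebra.TensorProduct.includeRight_apply]
    rw [ψh_tmul, map_one, one_mul, ψ₂, m2Hom_apply]
    unfold m2Fun
    simp only [map_add, map_smul, map_one, map_mul, φh_eB, cgen_fiI, cgen_giI,
      Algebra.TensorProduct.tmul_mul_tmul, one_mul, matFG]
    conv_rhs => rw [← mat_reconstruct m]
    simp only [TensorProduct.tmul_add, TensorProduct.tmul_smul, Algebra.TensorProduct.one_def]

noncomputable def equivMain : CliffordAlgebra (QB p q) ≃ₐ[ℝ]
    (CliffordAlgebra (QS p q) ⊗[ℝ] Matrix (Fin 2) (Fin 2) ℝ) :=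
  AlgEquiv.ofAlgHom (φh p q) (ψh p q) (comp2 p q) (comp1 p q)

end Main2

end CliffordSuccAux

theorem clifford_succ_succ_iso (p q : ℕ) :
    Nonempty (CliffordPQ (p + 1) (q + 1) ≃ₐ[ℝ]
      (CliffordPQ p q ⊗[ℝ] Matrix (Fin 2) (Fin 2) ℝ)) := by
  exact ⟨CliffordSuccAux.equivMain p q⟩
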